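/- Let f, g : ℝ^N → ℝ be measurable, C, A > 0 with |f(x)| ≤ C e^{-|x|} and |g(x)| ≤ C e^{-|x|} |x|^{(1-N)/2} for |x| > A. Let a > b > 0. For y₀ ∈ ℝ with |y₀| → ∞ and α = |y₀|/2, the integral ∫_{√α < |x| < α} |f(x)|^a |g(x - (y₀,0))|^b dx = o(|y₀|^{b(1-N)/2} e^{-b|y₀|}) as |y₀| → ∞. -/

import Mathlib

open Real MeasureTheory Filter Asymptotics Topology

set_option maxHeartbeats 1000000

/-- The contribution of the intermediate annulus `√α < |x| < α`, `α = |y₀|/2`, to the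
convolution-type integral is negligible compared to `|y₀|^{b(1-N)/2} e^{-b|y₀|}`
as `|y₀| → ∞`. -/
theorem stmt2 (N : ℕ) (hN : 2 ≤ N)
    (f g : EuclideanSpace ℝ (Fin N) → ℝ) (hf : Measurable f) (hg : Measurable g)
    (C A : ℝ) (hC : 0 < C) (hA : 0 < A)
    (hfb : ∀ x : EuclideanSpace ℝ (Fin N), A < ‖x‖ → |f x| ≤ C * Real.exp (-‖x‖))
    (hgb : ∀ x : EuclideanSpace ℝ (Fin N), A < ‖x‖ →
      |g x| ≤ C * Real.exp (-‖x‖) * ‖x‖ ^ (((1 : ℝ) - N) / 2))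
    (a b : ℝ) (hb : 0 < b) (hab : b < a) :
    (fun y₀ : ℝ => ∫ x in {x : EuclideanSpace ℝ (Fin N) |
          Real.sqrt (|y₀| / 2) < ‖x‖ ∧ ‖x‖ < |y₀| / 2},
        |f x| ^ a * |g (x - EuclideanSpace.single (⟨0, by omega⟩ : Fin N) y₀)| ^ b)
      =o[Filter.comap (fun y₀ : ℝ => |y₀|) Filter.atTop]
      (fun y₀ : ℝ => |y₀| ^ (b * ((1 - (N : ℝ)) / 2)) * Real.exp (-b * |y₀|)) := by
  set L := Filter.comap (fun y₀ : ℝ => |y₀|) Filter.atTop with hL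
  have habs : Tendsto (fun y₀ : ℝ => |y₀|) L atTop := tendsto_comap
  set c := a - b with hc
  have hcpos : 0 < c := by rw [hc]; linarith
  set p := b * ((1 - (N : ℝ)) / 2) with hp
  have hq : ((1 : ℝ) - N) / 2 ≤ 0 := by
    have h2N : (2 : ℝ) ≤ N := by exact_mod_cast hN
    linarith
  set V := (volume (Metric.ball (0 : EuclideanSpace ℝ (Fin N)) 1)).toReal with hV
  have hV0 : 0 ≤ V := ENNReal.toReal_nonneg
  set K := C ^ a * C ^ b with hK
  have hK0 : 0 ≤ K := mul_nonneg (Real.rpow_nonneg hC.le a) (Real.rpow_nonneg hC.le b)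
  have h2p : (0 : ℝ) < 2 ^ p := Real.rpow_pos_of_pos two_pos p
  set φ : ℝ → ℝ := fun y₀ =>
    K * V / 2 ^ p * ((|y₀| / 2) ^ N * Real.exp (-c * Real.sqrt (|y₀| / 2))) with hφ
  -- tendsto of the scalar prefactor
  have hψ : Tendsto (fun t : ℝ => t ^ N * Real.exp (-c * Real.sqrt t)) atTop (𝓝 0) := by
    have h1 : Tendsto (fun s : ℝ => s ^ (2 * N) * Real.exp (-c * s)) atTop (𝓝 0) := by
      have h := tendsto_rpow_mul_exp_neg_mul_atTop_nhds_zero ((2 * N : ℕ) : ℝ) c hcpos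
      refine h.congr fun s => ?_
      rw [Real.rpow_natCast]
    have hsqrt : Tendsto Real.sqrt atTop atTop :=
      (tendsto_rpow_atTop one_half_pos).congr fun x => (Real.sqrt_eq_rpow x).symm
    have h3 := h1.comp hsqrt
    refine h3.congr' ?_
    filter_upwards [eventually_ge_atTop (0 : ℝ)] with t ht
    simp only [Function.comp_apply]
    rw [pow_mul, Real.sq_sqrt ht]
  have hφ0 : Tendsto φ L (𝓝 0) := by
    have h4 : Tendsto (fun y₀ : ℝ => (|y₀| / 2) ^ N * Real.exp (-c * Real.sqrt (|y₀| / 2)))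
        L (𝓝 0) := hψ.comp (habs.atTop_div_const two_pos)
    simpa only [mul_zero] using h4.const_mul (K * V / 2 ^ p)
  have h1 : φ =o[L] (fun _ : ℝ => (1 : ℝ)) := (isLittleO_one_iff ℝ).2 hφ0
  have h2 : (fun y₀ => φ y₀ * (|y₀| ^ p * Real.exp (-b * |y₀|))) =o[L]
      (fun y₀ : ℝ => |y₀| ^ p * Real.exp (-b * |y₀|)) := by
    simpa using h1.mul_isBigO
      (isBigO_refl (fun y₀ : ℝ => |y₀| ^ p * Real.exp (-b * |y₀|)) L)
  refine IsBigO.trans_isLittleO (IsBigO.of_bound 1 ?_) h2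
  filter_upwards [habs.eventually_ge_atTop (2 * A ^ 2 + 2 * A + 2)] with y₀ hy
  rw [one_mul]
  set α := |y₀| / 2 with hα
  have hαA2 : A ^ 2 < α := by rw [hα]; nlinarith
  have hαA : A < α := by rw [hα]; nlinarith [sq_nonneg A]
  have hα1 : (1 : ℝ) ≤ α := by rw [hα]; nlinarith [sq_nonneg A, hA.le]
  have hα0 : (0 : ℝ) < α := by linarith
  set y : EuclideanSpace ℝ (Fin N) := EuclideanSpace.single (⟨0, by omega⟩ : Fin N) y₀ with hy0
  have hny : ‖y‖ = |y₀| := by rw [hy0, EuclideanSpace.norm_single, Real.norm_eq_abs]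
  set S := {x : EuclideanSpace ℝ (Fin N) | Real.sqrt α < ‖x‖ ∧ ‖x‖ < α} with hS
  have hsub : S ⊆ Metric.ball (0 : EuclideanSpace ℝ (Fin N)) α := fun x hx => by
    rw [Metric.mem_ball, dist_zero_right]; exact hx.2
  have hSfin : volume S < ⊤ := lt_of_le_of_lt (measure_mono hsub) measure_ball_lt_top
  have hSm : MeasurableSet S := by
    have hpre : S = (fun x : EuclideanSpace ℝ (Fin N) => ‖x‖) ⁻¹' Set.Ioo (Real.sqrt α) α := rfl
    rw [hpre]; exact measurableSet_Ioo.preimage measurable_norm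
  set B := K * Real.exp (-c * Real.sqrt α) * Real.exp (-b * |y₀|) * α ^ p with hB
  have hB0 : 0 ≤ B :=
    mul_nonneg (mul_nonneg (mul_nonneg hK0 (Real.exp_pos _).le) (Real.exp_pos _).le)
      (Real.rpow_nonneg hα0.le p)
  have hpt : ∀ x, x ∈ S → ‖|f x| ^ a * |g (x - y)| ^ b‖ ≤ B := by
    intro x hx
    obtain ⟨hx1, hx2⟩ := hx
    have hxA : A < ‖x‖ :=
      calc A = Real.sqrt (A ^ 2) := (Real.sqrt_sq hA.le).symm
        _ < Real.sqrt α := Real.sqrt_lt_sqrt (sq_nonneg A) hαA2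
        _ < ‖x‖ := hx1
    have hfx := hfb x hxA
    have hz1 : |y₀| - ‖x‖ ≤ ‖x - y‖ := by
      have h := norm_sub_norm_le y x
      rwa [norm_sub_rev y x, hny] at h
    have hzα : α ≤ ‖x - y‖ := by
      have h2α : |y₀| = 2 * α := by rw [hα]; ring
      linarith
    have hzA : A < ‖x - y‖ := lt_of_lt_of_le hαA hzα
    have hgx := hgb (x - y) hzA
    have hgx2 : |g (x - y)| ≤ C * Real.exp (‖x‖ - |y₀|) * α ^ (((1 : ℝ) - N) / 2) := by
      refine hgx.trans ?_
      have he : Real.exp (-‖x - y‖) ≤ Real.exp (‖x‖ - |y₀|) := Real.exp_le_exp.2 (by linarith)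
      have hr : ‖x - y‖ ^ (((1 : ℝ) - N) / 2) ≤ α ^ (((1 : ℝ) - N) / 2) :=
        Real.rpow_le_rpow_of_nonpos hα0 hzα hq
      have h0 : (0 : ℝ) ≤ ‖x - y‖ ^ (((1 : ℝ) - N) / 2) := Real.rpow_nonneg (norm_nonneg _) _
      calc C * Real.exp (-‖x - y‖) * ‖x - y‖ ^ (((1 : ℝ) - N) / 2)
          ≤ C * Real.exp (‖x‖ - |y₀|) * ‖x - y‖ ^ (((1 : ℝ) - N) / 2) :=
            mul_le_mul_of_nonneg_right (mul_le_mul_of_nonneg_left he hC.le) h0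
        _ ≤ C * Real.exp (‖x‖ - |y₀|) * α ^ (((1 : ℝ) - N) / 2) :=
            mul_le_mul_of_nonneg_left hr (by positivity)
    have hfa : |f x| ^ a ≤ C ^ a * Real.exp (-‖x‖ * a) := by
      have h := Real.rpow_le_rpow (abs_nonneg _) hfx (by linarith : (0 : ℝ) ≤ a)
      rwa [Real.mul_rpow hC.le (Real.exp_pos _).le, ← Real.exp_mul] at h
    have hgb2 : |g (x - y)| ^ b ≤
        C ^ b * Real.exp ((‖x‖ - |y₀|) * b) * α ^ ((((1 : ℝ) - N) / 2) * b) := by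
      have h := Real.rpow_le_rpow (abs_nonneg _) hgx2 hb.le
      rwa [Real.mul_rpow (mul_nonneg hC.le (Real.exp_pos _).le) (Real.rpow_nonneg hα0.le _),
        Real.mul_rpow hC.le (Real.exp_pos _).le, ← Real.exp_mul, ← Real.rpow_mul hα0.le] at h
    have hnn1 : 0 ≤ |f x| ^ a := Real.rpow_nonneg (abs_nonneg _) _
    have hnn2 : 0 ≤ |g (x - y)| ^ b := Real.rpow_nonneg (abs_nonneg _) _
    rw [Real.norm_eq_abs, abs_of_nonneg (mul_nonneg hnn1 hnn2)]
    calc |f x| ^ a * |g (x - y)| ^ b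
        ≤ (C ^ a * Real.exp (-‖x‖ * a)) *
          (C ^ b * Real.exp ((‖x‖ - |y₀|) * b) * α ^ ((((1 : ℝ) - N) / 2) * b)) :=
          mul_le_mul hfa hgb2 hnn2 (by positivity)
      _ = K * Real.exp (-‖x‖ * a + (‖x‖ - |y₀|) * b) * α ^ p := by
          rw [Real.exp_add, show (((1 : ℝ) - N) / 2) * b = p from by rw [hp]; ring, hK]; ring
      _ ≤ K * Real.exp (-c * Real.sqrt α + -b * |y₀|) * α ^ p := by
          have hxb : Real.sqrt α ≤ ‖x‖ := hx1.le
          have hexp : -‖x‖ * a + (‖x‖ - |y₀|) * b ≤ -c * Real.sqrt α + -b * |y₀| := by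
            rw [hc]; nlinarith [mul_nonneg (sub_nonneg.2 hxb) (sub_nonneg.2 hab.le)]
          exact mul_le_mul_of_nonneg_right
            (mul_le_mul_of_nonneg_left (Real.exp_le_exp.2 hexp) hK0)
            (Real.rpow_nonneg hα0.le _)
      _ = B := by rw [hB, Real.exp_add]; ring
  have hvol : (volume S).toReal ≤ α ^ N * V := by
    have hv1 : (volume S).toReal ≤
        (volume (Metric.ball (0 : EuclideanSpace ℝ (Fin N)) α)).toReal :=
      ENNReal.toReal_mono measure_ball_lt_top.ne (measure_mono hsub)
    have hv2 : volume (Metric.ball (0 : EuclideanSpace ℝ (Fin N)) α)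
        = ENNReal.ofReal (α ^ N) *
          volume (Metric.ball (0 : EuclideanSpace ℝ (Fin N)) 1) := by
      rw [Measure.addHaar_ball_of_pos _ _ hα0, finrank_euclideanSpace_fin]
    rw [hv2, ENNReal.toReal_mul, ENNReal.toReal_ofReal (pow_nonneg hα0.le N)] at hv1
    exact hv1
  have hIle : ‖∫ x in S, |f x| ^ a * |g (x - y)| ^ b‖ ≤ B * (α ^ N * V) :=
    (norm_setIntegral_le_of_norm_le_const_ae' hSfin (Eventually.of_forall hpt)).trans
      (mul_le_mul_of_nonneg_left hvol hB0)
  refine hIle.trans (le_of_eq ?_)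
  have hφy : φ y₀ = K * V / 2 ^ p * (α ^ N * Real.exp (-c * Real.sqrt α)) := by
    simp only [hφ]; rfl
  have hpos : 0 ≤ φ y₀ * (|y₀| ^ p * Real.exp (-b * |y₀|)) := by
    rw [hφy]
    have hKV : (0 : ℝ) ≤ K * V / 2 ^ p := div_nonneg (mul_nonneg hK0 hV0) h2p.le
    exact mul_nonneg (mul_nonneg hKV (mul_nonneg (pow_nonneg hα0.le N) (Real.exp_pos _).le))
      (mul_nonneg (Real.rpow_nonneg (abs_nonneg _) _) (Real.exp_pos _).le)
  have hαp : α ^ p = |y₀| ^ p / 2 ^ p := by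
    rw [hα, Real.div_rpow (abs_nonneg y₀) (by norm_num : (0 : ℝ) ≤ 2)]
  rw [Real.norm_of_nonneg hpos, hφy, hB, hαp, div_eq_mul_inv, div_eq_mul_inv]
  ring
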